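/- For the contracted radius gadget (G',w'): if F'(x,y)=1 then R_{G',w'} ≤ max{2α, β}, and if F'(x,y)=0 then R_{G',w'} ≥ min{α+β, 3α}. -/

import Mathlib

open scoped ENNReal

set_option linter.unusedVariables false

/-- The length of a walk with respect to `ℝ≥0∞` edge weights. -/
noncomputable def wlen {V : Type*} (G : SimpleGraph V) (w : V → V → ℝ≥0∞) {u v : V}
    (p : G.Walk u v) : ℝ≥0∞ :=
  (p.darts.map fun d => w d.toProd.1 d.toProd.2).sum

/-- The weighted distance: the infimum of walk lengths. -/
noncomputable def wdist {V : Type*} (G : SimpleGraph V) (w : V → V → ℝ≥0∞) (u v : V) : ℝ≥0∞ :=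
  ⨅ p : G.Walk u v, wlen G w p

/-- Eccentricity `e_{G,w}(u) = max_v d_{G,w}(u,v)`. -/
noncomputable def wecc {V : Type*} (G : SimpleGraph V) (w : V → V → ℝ≥0∞) (u : V) : ℝ≥0∞ :=
  ⨆ v, wdist G w u v

/-- Weighted radius `R_{G,w} = min_u e_{G,w}(u)`. -/
noncomputable def wrad {V : Type*} (G : SimpleGraph V) (w : V → V → ℝ≥0∞) : ℝ≥0∞ :=
  ⨅ u, wecc G w u

/-- Vertices of the contracted radius gadget. -/
inductive CRV (s ℓ : ℕ) where
  /-- the hub `t` -/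
  | t
  /-- the extra node `a_0` -/
  | a0
  /-- node `a^z_{j+1}` -/
  | ah (z : Bool) (j : Fin s)
  /-- node `a*_{j+1}` -/
  | as (j : Fin ℓ)
  /-- node `a_{i+1}` -/
  | a (i : Fin (2 ^ s))
  /-- node `b_{i+1}` -/
  | b (i : Fin (2 ^ s))
  deriving DecidableEq, Fintype

/-- Base (oriented) adjacency of the contracted radius gadget.  Here `bin(i,j)` is
realized as `Nat.testBit` on the 0-based index, and `bin(i,j)⊕1` as its negation. -/
def crAdj0 {s ℓ : ℕ} : CRV s ℓ → CRV s ℓ → Prop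
  | .t, .ah _ _ => True
  | .t, .as _ => True
  | .a i, .ah z j => z = i.val.testBit j.val
  | .b i, .ah z j => z = !(i.val.testBit j.val)
  | .a i, .a i' => i ≠ i'
  | .b i, .b i' => i ≠ i'
  | .a _, .as _ => True
  | .b _, .as _ => True
  | .a0, .a _ => True
  | _, _ => False

/-- The contracted radius gadget graph. -/
def crGadget (s ℓ : ℕ) : SimpleGraph (CRV s ℓ) where
  Adj u v := u ≠ v ∧ (crAdj0 u v ∨ crAdj0 v u)
  symm := ⟨fun u v huv => ⟨huv.1.symm, huv.2.symm⟩⟩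
  loopless := ⟨fun u hu => hu.1 rfl⟩

/-- The weights of the contracted radius gadget: every edge has weight `α`, except
`a_i`–`a*_j` which has weight `α` if `x_{i,j}=1` and `β` otherwise, `b_i`–`a*_j` which
has weight `α` if `y_{i,j}=1` and `β` otherwise, and `a_0`–`a_i` which has weight `2α`. -/
def crW {s ℓ : ℕ} (x y : Fin (2 ^ s) → Fin ℓ → Bool) (α β : ℕ) : CRV s ℓ → CRV s ℓ → ℕ
  | .a i, .as j => if x i j then α else β
  | .as j, .a i => if x i j then α else β
  | .b i, .as j => if y i j then α else β
  | .as j, .b i => if y i j then α else β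
  | .a0, .a _ => 2 * α
  | .a _, .a0 => 2 * α
  | _, _ => α

/-! ### Auxiliary lemmas -/

lemma wlen_nil' {V : Type*} (G : SimpleGraph V) (w : V → V → ℝ≥0∞) (u : V) :
    wlen G w (SimpleGraph.Walk.nil : G.Walk u u) = 0 := rfl

lemma wlen_cons' {V : Type*} (G : SimpleGraph V) (w : V → V → ℝ≥0∞) {u c v : V}
    (h : G.Adj u c) (p : G.Walk c v) :
    wlen G w (SimpleGraph.Walk.cons h p) = w u c + wlen G w p := by
  simp [wlen]

lemma wlen_ge_pot {V : Type*} (G : SimpleGraph V) (w : V → V → ℝ≥0∞) (φ : V → ℝ≥0∞)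
    (hφ : ∀ p q, G.Adj p q → φ p ≤ φ q + w p q) {u v : V} (p : G.Walk u v) :
    φ u ≤ φ v + wlen G w p := by
  induction p with
  | nil => simp [wlen_nil']
  | @cons a b c h p ih =>
    calc φ a ≤ φ b + w a b := hφ _ _ h
    _ ≤ (φ c + wlen G w p) + w a b := by gcongr
    _ = φ c + wlen G w (SimpleGraph.Walk.cons h p) := by rw [wlen_cons']; ring

/-- Potential for lower-bounding distances to `a₀`. -/
def phiA {s ℓ : ℕ} (α : ℕ) : CRV s ℓ → ℕ
  | .a0 => 0
  | .a _ => 2*α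
  | _ => 3*α

/-- Potential for lower-bounding distances to `t`. -/
def phiE {s ℓ : ℕ} (α : ℕ) : CRV s ℓ → ℕ
  | .t => 0
  | .ah _ _ => α
  | .as _ => α
  | .a0 => 3*α
  | .a _ => 2*α
  | .b _ => 2*α

/-- Potential for lower-bounding distances to `b i₀`. -/
def phiD {s ℓ : ℕ} (i₀ : Fin (2^s)) (x y : Fin (2^s) → Fin ℓ → Bool) (α β : ℕ) :
    CRV s ℓ → ℕ
  | .b i => if i = i₀ then 0 else α
  | .a i => if i = i₀ then min (α+β) (3*α) else min β (2*α)
  | .ah z j => if z = !(i₀.val.testBit j.val) then α else min β (2*α)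
  | .as j => if y i₀ j then α else min β (2*α)
  | .t => 2*α
  | .a0 => α

section conds
variable {s ℓ : ℕ} {x y : Fin (2^s) → Fin ℓ → Bool} {α β : ℕ}

lemma phiA_cond (hαβ : α ≤ β) (p q : CRV s ℓ) (h : (crGadget s ℓ).Adj p q) :
    phiA α p ≤ phiA α q + crW x y α β p q := by
  obtain ⟨hne, hadj⟩ := h
  cases p <;> cases q <;> simp [crAdj0] at hadj <;>
    simp [phiA, crW] <;> (try split_ifs) <;> omega

lemma phiE_cond (hαβ : α ≤ β) (p q : CRV s ℓ) (h : (crGadget s ℓ).Adj p q) :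
    phiE α p ≤ phiE α q + crW x y α β p q := by
  obtain ⟨hne, hadj⟩ := h
  cases p <;> cases q <;> simp [crAdj0] at hadj <;>
    simp [phiE, crW] <;> (try split_ifs) <;> omega

lemma phiD_cond (hαβ : α ≤ β) (hno : ∀ i j, x i j = true → y i j = false)
    (i₀ : Fin (2^s)) (p q : CRV s ℓ) (h : (crGadget s ℓ).Adj p q) :
    phiD i₀ x y α β p ≤ phiD i₀ x y α β q + crW x y α β p q := by
  obtain ⟨hne, hadj⟩ := h
  cases p <;> cases q <;> simp [crAdj0] at hadj <;>
    simp only [phiD, crW] <;> (try split_ifs) <;> try omega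
  all_goals (simp_all; try omega)

end conds

lemma bit_flip_lt {s j : ℕ} (hj : j < s) {i : ℕ} (hi : i < 2^s) : i ^^^ 2^j < 2^s :=
  Nat.xor_lt_two_pow hi (Nat.pow_lt_pow_right one_lt_two hj)

lemma bit_flip_testBit {j i : ℕ} : (i ^^^ 2^j).testBit j = !(i.testBit j) := by
  simp [Nat.testBit_xor]

lemma bit_flip_ne {j i : ℕ} : i ^^^ 2^j ≠ i := by
  intro h
  have := bit_flip_testBit (j := j) (i := i)
  rw [h] at this
  simp at this

lemma exists_diff_bit {s : ℕ} (i i₀ : Fin (2^s)) (h : i ≠ i₀) :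
    ∃ j : Fin s, i₀.val.testBit j.val = !(i.val.testBit j.val) := by
  by_contra hc
  push_neg at hc
  apply h
  apply Fin.ext
  apply Nat.eq_of_testBit_eq
  intro n
  by_cases hn : n < s
  · have := hc ⟨n, hn⟩
    cases hb : (i.val).testBit n <;> cases hb0 : (i₀.val).testBit n <;> simp_all
  · rw [Nat.testBit_eq_false_of_lt, Nat.testBit_eq_false_of_lt] <;>
      exact lt_of_lt_of_le (Fin.is_lt _) (Nat.pow_le_pow_right (by norm_num) (le_of_not_gt hn))

/-- For the contracted radius gadget `(G',w')`: if `F'(x,y)=1` then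
`R_{G',w'} ≤ max{2α, β}`, and if `F'(x,y)=0` then `R_{G',w'} ≥ min{α+β, 3α}`, where
`F'(x,y) = ⋁_{i,j} (x_{i,j} ∧ y_{i,j})`. -/
theorem stmt9 (s ℓ : ℕ) (hs : 1 ≤ s) (hℓ : 1 ≤ ℓ)
    (α β : ℕ) (hα : 0 < α) (hαβ : α ≤ β)
    (x y : Fin (2 ^ s) → Fin ℓ → Bool) :
    ((∃ (i : Fin (2 ^ s)) (j : Fin ℓ), x i j = true ∧ y i j = true) →
      wrad (crGadget s ℓ) (fun p q => ((crW x y α β p q : ℕ) : ℝ≥0∞)) ≤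
        ((max (2 * α) β : ℕ) : ℝ≥0∞)) ∧
    ((¬ ∃ (i : Fin (2 ^ s)) (j : Fin ℓ), x i j = true ∧ y i j = true) →
      ((min (α + β) (3 * α) : ℕ) : ℝ≥0∞) ≤
        wrad (crGadget s ℓ) (fun p q => ((crW x y α β p q : ℕ) : ℝ≥0∞))) := by
  set G := crGadget s ℓ with hG
  set W : CRV s ℓ → CRV s ℓ → ℝ≥0∞ := fun p q => ((crW x y α β p q : ℕ) : ℝ≥0∞) with hW
  constructor
  · -- upper bound
    rintro ⟨i₀, j₀, hx, hy⟩
    have adjmk : ∀ p q : CRV s ℓ, p ≠ q → (crAdj0 p q ∨ crAdj0 q p) → G.Adj p q :=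
      fun p q h1 h2 => ⟨h1, h2⟩
    have key : ∀ v : CRV s ℓ, wdist G W (CRV.a i₀) v ≤ ((max (2*α) β : ℕ) : ℝ≥0∞) := by
      intro v
      have bnd : ∀ (p : G.Walk (CRV.a i₀) v) (n : ℕ),
          wlen G W p ≤ (n : ℝ≥0∞) → n ≤ max (2*α) β →
          wdist G W (CRV.a i₀) v ≤ ((max (2*α) β : ℕ) : ℝ≥0∞) := by
        intro p n h1 h2
        refine le_trans (iInf_le _ p) (le_trans h1 ?_)
        exact_mod_cast h2
      match v with
      | .t =>
        have h1 : G.Adj (CRV.a i₀) (CRV.as j₀) := adjmk _ _ (by simp) (Or.inl trivial)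
        have h2 : G.Adj (CRV.as j₀) CRV.t := adjmk _ _ (by simp) (Or.inr trivial)
        refine bnd (.cons h1 (.cons h2 .nil)) (2*α) ?_ (le_max_left _ _)
        simp only [wlen_cons', wlen_nil', add_zero, hW]
        rw [← Nat.cast_add]
        refine Nat.cast_le.mpr ?_
        simp [crW, hx]; omega
      | .a0 =>
        have h1 : G.Adj (CRV.a i₀) CRV.a0 := adjmk _ _ (by simp) (Or.inr trivial)
        refine bnd (.cons h1 .nil) (2*α) ?_ (le_max_left _ _)
        simp only [wlen_cons', wlen_nil', add_zero, hW]
        refine Nat.cast_le.mpr ?_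
        simp [crW]
      | .ah z j =>
        by_cases hz : z = (i₀.val).testBit j.val
        · have h1 : G.Adj (CRV.a i₀) (CRV.ah z j) := adjmk _ _ (by simp) (Or.inl hz)
          refine bnd (.cons h1 .nil) α ?_ (by omega)
          simp only [wlen_cons', wlen_nil', add_zero, hW]
          refine Nat.cast_le.mpr ?_
          simp [crW]
        · set i' : Fin (2^s) := ⟨i₀.val ^^^ 2^j.val, bit_flip_lt j.isLt i₀.isLt⟩ with hi'
          have hne : i₀ ≠ i' := by
            intro h
            exact bit_flip_ne (congrArg Fin.val h).symm
          have hz' : z = (i'.val).testBit j.val := by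
            rw [hi']
            simp only [bit_flip_testBit]
            cases z <;> simp_all
          have h1 : G.Adj (CRV.a i₀) (CRV.a i') := adjmk _ _ (by simpa using hne) (Or.inl hne)
          have h2 : G.Adj (CRV.a i') (CRV.ah z j) := adjmk _ _ (by simp) (Or.inl hz')
          refine bnd (.cons h1 (.cons h2 .nil)) (2*α) ?_ (le_max_left _ _)
          simp only [wlen_cons', wlen_nil', add_zero, hW]
          rw [← Nat.cast_add]
          refine Nat.cast_le.mpr ?_
          simp [crW]; omega
      | .as j =>
        have h1 : G.Adj (CRV.a i₀) (CRV.as j) := adjmk _ _ (by simp) (Or.inl trivial)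
        refine bnd (.cons h1 .nil) (max (2*α) β) ?_ le_rfl
        simp only [wlen_cons', wlen_nil', add_zero, hW]
        refine Nat.cast_le.mpr ?_
        simp only [crW]; split_ifs <;> omega
      | .a i =>
        by_cases hii : i₀ = i
        · subst hii
          refine le_trans (iInf_le _ .nil) ?_
          simp [wlen_nil']
        · have h1 : G.Adj (CRV.a i₀) (CRV.a i) := adjmk _ _ (by simpa using hii) (Or.inl hii)
          refine bnd (.cons h1 .nil) α ?_ (by omega)
          simp only [wlen_cons', wlen_nil', add_zero, hW]
          refine Nat.cast_le.mpr ?_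
          simp [crW]
      | .b i =>
        by_cases hii : i = i₀
        · subst hii
          have h1 : G.Adj (CRV.a i) (CRV.as j₀) := adjmk _ _ (by simp) (Or.inl trivial)
          have h2 : G.Adj (CRV.as j₀) (CRV.b i) := adjmk _ _ (by simp) (Or.inr trivial)
          refine bnd (.cons h1 (.cons h2 .nil)) (2*α) ?_ (le_max_left _ _)
          simp only [wlen_cons', wlen_nil', add_zero, hW]
          rw [← Nat.cast_add]
          refine Nat.cast_le.mpr ?_
          simp [crW, hx, hy]; omega
        · obtain ⟨j, hj⟩ := exists_diff_bit i i₀ hii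
          have h1 : G.Adj (CRV.a i₀) (CRV.ah ((i₀.val).testBit j.val) j) :=
            adjmk _ _ (by simp) (Or.inl rfl)
          have h2 : G.Adj (CRV.ah ((i₀.val).testBit j.val) j) (CRV.b i) :=
            adjmk _ _ (by simp) (Or.inr hj)
          refine bnd (.cons h1 (.cons h2 .nil)) (2*α) ?_ (le_max_left _ _)
          simp only [wlen_cons', wlen_nil', add_zero, hW]
          rw [← Nat.cast_add]
          refine Nat.cast_le.mpr ?_
          simp [crW]; omega
    refine le_trans (iInf_le _ (CRV.a i₀)) ?_
    exact iSup_le key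
  · -- lower bound
    intro hno'
    push_neg at hno'
    have hno : ∀ i j, x i j = true → y i j = false := by
      intro i j hxij
      have := hno' i j
      simpa [hxij] using this
    have bridge : ∀ (φ : CRV s ℓ → ℕ)
        (hc : ∀ p q, G.Adj p q → φ p ≤ φ q + crW x y α β p q)
        (u v : CRV s ℓ), φ v = 0 → min (α+β) (3*α) ≤ φ u →
        ((min (α + β) (3 * α) : ℕ) : ℝ≥0∞) ≤ wecc G W u := by
      intro φ hc u v hv hu
      refine le_trans ?_ (le_iSup _ v)
      refine le_iInf ?_
      intro p
      have hpot := wlen_ge_pot G W (fun r => ((φ r : ℕ) : ℝ≥0∞))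
        (fun p q h => by
          have := hc p q h
          rw [hW]
          calc ((φ p : ℕ) : ℝ≥0∞) ≤ ((φ q + crW x y α β p q : ℕ) : ℝ≥0∞) :=
            Nat.cast_le.mpr this
          _ = _ := by push_cast; ring) p
      simp only [hv, Nat.cast_zero, zero_add] at hpot
      exact le_trans (Nat.cast_le.mpr hu) hpot
    refine le_iInf ?_
    intro u
    match u with
    | .t => exact bridge (phiA α) (phiA_cond hαβ) _ CRV.a0 rfl (by simp only [phiA]; omega)
    | .a0 => exact bridge (phiE α) (phiE_cond hαβ) _ CRV.t rfl (by simp only [phiE]; omega)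
    | .ah z j => exact bridge (phiA α) (phiA_cond hαβ) _ CRV.a0 rfl (by simp only [phiA]; omega)
    | .as j => exact bridge (phiA α) (phiA_cond hαβ) _ CRV.a0 rfl (by simp only [phiA]; omega)
    | .b i => exact bridge (phiA α) (phiA_cond hαβ) _ CRV.a0 rfl (by simp only [phiA]; omega)
    | .a i =>
      exact bridge (phiD i x y α β) (phiD_cond hαβ hno i) _ (CRV.b i)
        (by simp [phiD]) (by simp [phiD])
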